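/- Let 𝒞 ⊆ 𝒫(X) be a set system whose one-inclusion graph is connected with graph distance equal to Hamming distance, and suppose 𝒞 has ladder dimension at most n. Then for any C₁, C₂ ∈ 𝒞, |C₁ \ C₂| ≤ n. -/

import Mathlib

open Set

variable {α : Type*}

/-- The trace of a set system on a set `A`. -/
def trace (𝒞 : Set (Set α)) (A : Set α) : Set (Set α) := {s | ∃ C ∈ 𝒞, s = C ∩ A}

/-- `∑_{i=0}^{d} (n choose i)`. -/
def binLe (n d : ℕ) : ℕ := ∑ i ∈ Finset.range (d + 1), n.choose i

/-- `𝒞` shatters `A`. -/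
def shatters (𝒞 : Set (Set α)) (A : Set α) : Prop := ∀ B ⊆ A, ∃ C ∈ 𝒞, C ∩ A = B

/-- `𝒞` is a `d`-maximum set system. -/
def isMaximum (𝒞 : Set (Set α)) (d : ℕ) : Prop :=
  ∀ A : Set α, A.Finite → (trace 𝒞 A).ncard = binLe A.ncard d

/-- There is a ladder of length `n` for `𝒞`. -/
def hasLadder (𝒞 : Set (Set α)) (n : ℕ) : Prop :=
  ∃ (x : Fin n → α) (B : Fin n → Set α), (∀ j, B j ∈ 𝒞) ∧ ∀ i j, x i ∈ B j ↔ i < j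

/-- The one-inclusion graph of a set system. -/
def oneInclusionGraph (𝒞 : Set (Set α)) : SimpleGraph 𝒞 where
  Adj C₁ C₂ := (symmDiff (C₁ : Set α) (C₂ : Set α)).ncard = 1
  symm := by
    constructor
    intro C₁ C₂ h
    rwa [symmDiff_comm]
  loopless := by
    constructor
    intro C h
    simp [symmDiff_self] at h

/-- If the one-inclusion graph is connected with graph distance equal to Hamming
distance, and ladder dimension is at most `n`, then set differences are at most `n`. -/
theorem diff_card_le_of_ladder [Fintype α] (𝒞 : Set (Set α)) (n : ℕ)
    (hconn : ∀ C₁ C₂ : 𝒞, (oneInclusionGraph 𝒞).Reachable C₁ C₂)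
    (hdist : ∀ C₁ C₂ : 𝒞,
      (oneInclusionGraph 𝒞).dist C₁ C₂ = (symmDiff (C₁ : Set α) (C₂ : Set α)).ncard)
    (hLD : ¬ hasLadder 𝒞 (n + 1)) :
    ∀ C₁ ∈ 𝒞, ∀ C₂ ∈ 𝒞, (C₁ \ C₂).ncard ≤ n := by
  classical
  intro C₁ h₁ C₂ h₂
  by_contra hgt
  push_neg at hgt
  apply hLD
  obtain ⟨p, hp⟩ := (hconn ⟨C₂, h₂⟩ ⟨C₁, h₁⟩).exists_walk_length_eq_dist
  set m := p.length with hmdef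
  have hm : m = (symmDiff C₂ C₁).ncard := hp.trans (hdist _ _)
  set f : ℕ → Set α := fun t => ((p.getVert t : 𝒞) : Set α) with hf
  set S : ℕ → Set α := fun t => symmDiff (f t) C₁ with hS
  have hf𝒞 : ∀ t, f t ∈ 𝒞 := fun t => (p.getVert t).2
  have hS0 : S 0 = symmDiff C₂ C₁ := by
    simp only [hS, hf, SimpleGraph.Walk.getVert_zero]
  have hSm : ∀ t, m ≤ t → S t = ∅ := by
    intro t ht
    simp only [hS, hf, p.getVert_of_length_le ht, symmDiff_self]
    rfl
  -- one step bound
  have step_le : ∀ t, t < m → (S t).ncard ≤ (S (t + 1)).ncard + 1 := by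
    intro t ht
    have hadj := p.adj_getVert_succ ht
    have h1 : (symmDiff (f t) (f (t + 1))).ncard = 1 := hadj
    have htri : S t ⊆ symmDiff (f t) (f (t + 1)) ∪ S (t + 1) :=
      symmDiff_triangle (f t) (f (t + 1)) C₁
    calc (S t).ncard ≤ (symmDiff (f t) (f (t + 1)) ∪ S (t + 1)).ncard :=
          Set.ncard_le_ncard htri (Set.toFinite _)
      _ ≤ (symmDiff (f t) (f (t + 1))).ncard + (S (t + 1)).ncard := Set.ncard_union_le _ _
      _ = (S (t + 1)).ncard + 1 := by rw [h1]; omega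
  have chain : ∀ k a, a + k ≤ m → (S a).ncard ≤ (S (a + k)).ncard + k := by
    intro k
    induction k with
    | zero => intro a _; simp
    | succ k ih =>
      intro a ha
      have h1 := ih a (by omega)
      have h2 := step_le (a + k) (by omega)
      have : a + (k + 1) = a + k + 1 := by omega
      rw [this]
      omega
  have card_eq : ∀ t, t ≤ m → (S t).ncard = m - t := by
    intro t ht
    have hup : (S t).ncard ≤ m - t := by
      have := chain (m - t) t (by omega)
      have heq : t + (m - t) = m := by omega
      rw [heq] at this
      rw [hSm m le_rfl] at this
      simpa using this
    have hdown : m - t ≤ (S t).ncard := by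
      have := chain t 0 (by omega)
      simp only [Nat.zero_add] at this
      rw [hS0, ← hm] at this
      omega
    omega
  -- structure of each step
  have step_str : ∀ t, t < m → ∃ z ∈ S t, S (t + 1) = S t \ {z} := by
    intro t ht
    have hadj := p.adj_getVert_succ ht
    have h1 : (symmDiff (f t) (f (t + 1))).ncard = 1 := hadj
    obtain ⟨z, hz⟩ := Set.ncard_eq_one.mp h1
    have hfz : f (t + 1) = symmDiff (f t) {z} := by
      rw [← hz, symmDiff_symmDiff_cancel_left]
    have hSz : S (t + 1) = symmDiff (S t) {z} := by
      simp only [hS, hfz]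
      exact symmDiff_right_comm ..
    have hcard : (S (t + 1)).ncard < (S t).ncard := by
      rw [card_eq t ht.le, card_eq (t + 1) ht]
      omega
    by_cases hzS : z ∈ S t
    · refine ⟨z, hzS, ?_⟩
      rw [hSz]
      ext x
      by_cases hxz : x = z <;> simp [Set.mem_symmDiff, hxz, hzS]
    · exfalso
      have : S (t + 1) = insert z (S t) := by
        rw [hSz]
        ext x
        by_cases hxz : x = z <;> simp [Set.mem_symmDiff, hxz, hzS]
      rw [this, Set.ncard_insert_of_notMem hzS (Set.toFinite _)] at hcard
      omega
  have mono : ∀ t, S (t + 1) ⊆ S t := by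
    intro t
    by_cases ht : t < m
    · obtain ⟨z, _, hz⟩ := step_str t ht
      rw [hz]; exact Set.diff_subset
    · rw [hSm (t + 1) (by omega)]; exact Set.empty_subset _
  have anti : ∀ a b, a ≤ b → S b ⊆ S a := by
    intro a b hab
    obtain ⟨k, rfl⟩ := Nat.exists_eq_add_of_le hab
    induction k with
    | zero => simp
    | succ k ih =>
      have : a + (k + 1) = a + k + 1 := by omega
      rw [this]
      exact (mono (a + k)).trans (ih (by omega))
  set tx : α → ℕ := fun x => sInf {t | x ∉ S t} with htx
  have txm : ∀ x, x ∉ S (tx x) := by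
    intro x
    have hne : ∃ t, t ∈ {t | x ∉ S t} := ⟨m, by show x ∉ S m; rw [hSm m le_rfl]; exact notMem_empty x⟩
    have h := Nat.sInf_mem hne
    exact h
  have tx_iff : ∀ x t, x ∉ S t ↔ tx x ≤ t := by
    intro x t
    constructor
    · intro h; exact Nat.sInf_le h
    · intro h hx
      exact txm x (anti _ _ h hx)
  have tx_le : ∀ x, tx x ≤ m := fun x =>
    (tx_iff x m).mp (by rw [hSm m le_rfl]; exact notMem_empty x)
  have hDS0 : ∀ x ∈ C₁ \ C₂, x ∈ S 0 := by
    intro x hx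
    rw [hS0, Set.mem_symmDiff]
    exact Or.inr ⟨hx.1, hx.2⟩
  have tx_pos : ∀ x ∈ C₁ \ C₂, 1 ≤ tx x := by
    intro x hx
    by_contra h
    exact (tx_iff x 0).mpr (by omega) (hDS0 x hx)
  have tx_inj : Set.InjOn tx (C₁ \ C₂) := by
    intro x hx y hy hxy
    set t := tx x with htdef
    have ht1 : 1 ≤ t := tx_pos x hx
    have htm : t ≤ m := tx_le x
    obtain ⟨z, hzS, hz⟩ := step_str (t - 1) (by omega)
    have ht' : t - 1 + 1 = t := by omega
    rw [ht'] at hz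
    have hxS : x ∈ S (t - 1) := by
      by_contra h
      have := (tx_iff x (t - 1)).mp h
      omega
    have hyS : y ∈ S (t - 1) := by
      by_contra h
      have := (tx_iff y (t - 1)).mp h
      omega
    have hxt : x ∉ S t := by rw [htdef]; exact txm x
    have hyt : y ∉ S t := by rw [hxy]; exact txm y
    rw [hz] at hxt hyt
    simp only [Set.mem_diff, Set.mem_singleton_iff, not_and, not_not] at hxt hyt
    rw [hxt hxS, hyt hyS]
  have mem_f : ∀ x ∈ C₁ \ C₂, ∀ t, (x ∈ f t ↔ tx x ≤ t) := by
    intro x hx t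
    rw [← tx_iff]
    have hxC₁ : x ∈ C₁ := hx.1
    simp only [hS, Set.mem_symmDiff]
    constructor
    · intro hft
      simp [hft, hxC₁]
    · intro h
      by_contra hft
      exact h (Or.inr ⟨hxC₁, hft⟩)
  -- choose n+1 elements
  have hFcard : n + 1 ≤ ((Set.toFinite (C₁ \ C₂)).toFinset).card := by
    rw [← Set.ncard_eq_toFinset_card]
    omega
  obtain ⟨F', hF'sub, hF'card⟩ := Finset.exists_subset_card_eq hFcard
  have hF'D : ∀ x ∈ F', x ∈ C₁ \ C₂ := by
    intro x hx
    have := hF'sub hx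
    rwa [Set.Finite.mem_toFinset] at this
  have hTcard : (F'.image tx).card = n + 1 := by
    rw [Finset.card_image_of_injOn, hF'card]
    intro x hx y hy hxy
    exact tx_inj (hF'D x hx) (hF'D y hy) hxy
  set e := (F'.image tx).orderEmbOfFin hTcard with he
  have he_mem : ∀ j, ∃ x ∈ F', tx x = e j := by
    intro j
    exact Finset.mem_image.mp ((F'.image tx).orderEmbOfFin_mem hTcard j)
  choose xs hxsF hxse using he_mem
  have he_mono : StrictMono e := e.strictMono
  have he_pos : ∀ j, 1 ≤ e j := by
    intro j
    rw [← hxse j]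
    exact tx_pos _ (hF'D _ (hxsF j))
  refine ⟨xs, fun j => f (e j - 1), fun j => hf𝒞 _, ?_⟩
  intro i j
  rw [mem_f _ (hF'D _ (hxsF i)) _, hxse i]
  have hpj := he_pos j
  constructor
  · intro h
    have : e i < e j := by omega
    exact he_mono.lt_iff_lt.mp this
  · intro h
    have : e i < e j := he_mono h
    omega
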